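/- Let U be a nonzero n×m real matrix and A an n×n real symmetric positive semidefinite matrix of rank l whose nonzero eigenvalues are all strictly greater than b > 0. Let δ > 0 with b' = b − δ > 0, let Q be the orthogonal projection onto the kernel of A, and assume the invariant b ≤ δ·‖QU‖_HS²/‖U‖² and that Λ := φ(A,b) − φ(A,b') > 0. Define for v ∈ ℝⁿ: G(v) = −(vᵗ(A − b'·Id)⁻²v/Λ)·‖U‖² − vᵗ(A − b'·Id)⁻¹v. Then Σ_{j≤m} G(Ue_j) ≥ −‖U‖²/δ − φ(A,b). -/

import Mathlib

open Matrix
open scoped BigOperators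

/-- The operator norm of a matrix viewed as a map `ℓ₂^m → ℓ₂^n`. -/
noncomputable def opNorm {n m : ℕ} (U : Matrix (Fin n) (Fin m) ℝ) : ℝ :=
  ‖LinearMap.toContinuousLinearMap (Matrix.toEuclideanLin U)‖

/-- The square of the Hilbert–Schmidt (Frobenius) norm of a matrix. -/
noncomputable def frobSq {n m : ℕ} (U : Matrix (Fin n) (Fin m) ℝ) : ℝ :=
  ∑ i, ∑ j, (U i j) ^ 2

/-- `φ(A, b) = Tr (Uᵗ (A − b·Id)⁻¹ U)`. -/
noncomputable def phi {n m : ℕ} (U : Matrix (Fin n) (Fin m) ℝ)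
    (A : Matrix (Fin n) (Fin n) ℝ) (b : ℝ) : ℝ :=
  (Uᵀ * (A - b • 1)⁻¹ * U).trace

lemma trace_conj_diag {n m : ℕ} (V : Matrix (Fin n) (Fin m) ℝ) (f : Fin n → ℝ) :
    (Vᵀ * (Matrix.diagonal f) * V).trace = ∑ i, f i * ∑ j, (V i j)^2 := by
  rw [Matrix.mul_assoc]
  simp only [Matrix.trace, Matrix.diag, Matrix.mul_apply, Matrix.diagonal_apply,
    Matrix.transpose_apply, Finset.mul_sum, mul_ite, ite_mul, zero_mul, mul_zero,
    Finset.sum_ite_eq, Finset.mem_univ, if_true]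
  rw [Finset.sum_comm]
  congr 1; ext i; congr 1; ext j; ring

lemma sum_col_dot {n m : ℕ} (U : Matrix (Fin n) (Fin m) ℝ) (M : Matrix (Fin n) (Fin n) ℝ) :
    ∑ j, (fun i => U i j) ⬝ᵥ (M *ᵥ (fun i => U i j)) = (Uᵀ * M * U).trace := by
  simp only [Matrix.trace, Matrix.diag, Matrix.mul_apply, dotProduct, Matrix.mulVec,
    Matrix.transpose_apply, Finset.mul_sum, Finset.sum_mul]
  congr 1; ext j; rw [Finset.sum_comm]; congr 1; ext i; congr 1; ext k; ring

lemma conj_diag_sub_smul {n : ℕ} (W : Matrix (Fin n) (Fin n) ℝ) (hW2 : W * star W = 1)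
    (lam : Fin n → ℝ) (c : ℝ) :
    W * Matrix.diagonal lam * star W - c • 1
      = W * Matrix.diagonal (fun i => lam i - c) * star W := by
  have hd : Matrix.diagonal (fun i => lam i - c)
      = Matrix.diagonal lam - c • (1 : Matrix (Fin n) (Fin n) ℝ) := by
    rw [← Matrix.diagonal_one, ← Matrix.diagonal_smul, ← Matrix.diagonal_sub]
    congr 1; ext i j; simp [Matrix.diagonal_apply, Matrix.one_apply]
  rw [hd, Matrix.mul_sub, Matrix.sub_mul]
  congr 1
  rw [Matrix.mul_smul, Matrix.smul_mul, mul_one, hW2]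

lemma conj_diag_inv {n : ℕ} (W : Matrix (Fin n) (Fin n) ℝ) (hW1 : star W * W = 1)
    (hW2 : W * star W = 1) (f : Fin n → ℝ) (hf : ∀ i, f i ≠ 0) :
    (W * Matrix.diagonal f * star W)⁻¹ = W * Matrix.diagonal (fun i => (f i)⁻¹) * star W := by
  apply Matrix.inv_eq_right_inv
  calc W * Matrix.diagonal f * star W * (W * Matrix.diagonal (fun i => (f i)⁻¹) * star W)
      = W * (Matrix.diagonal f * (star W * W) * Matrix.diagonal (fun i => (f i)⁻¹)) * star W := by
        noncomm_ring
    _ = 1 := by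
        rw [hW1, mul_one, Matrix.diagonal_mul_diagonal]
        have h1 : (fun i => f i * (f i)⁻¹) = fun _ : Fin n => (1:ℝ) := by
          ext i; exact mul_inv_cancel₀ (hf i)
        rw [h1, Matrix.diagonal_one, mul_one, hW2]

lemma frobSq_eq_trace {p q : ℕ} (M : Matrix (Fin p) (Fin q) ℝ) :
    frobSq M = (Mᵀ * M).trace := by
  simp only [frobSq, Matrix.trace, Matrix.diag, Matrix.mul_apply, Matrix.transpose_apply, pow_two]
  rw [Finset.sum_comm]

lemma dot_symm {n : ℕ} (M : Matrix (Fin n) (Fin n) ℝ) (hM : Mᵀ = M) (x y : Fin n → ℝ) :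
    (M *ᵥ x) ⬝ᵥ y = x ⬝ᵥ (M *ᵥ y) := by
  rw [dotProduct_comm, Matrix.dotProduct_mulVec, ← Matrix.mulVec_transpose, hM,
    dotProduct_comm]

set_option maxHeartbeats 1000000 in
/-- **Lemma (average of `G` over the columns).** Let `A` be symmetric PSD of rank `l`
with nonzero eigenvalues `> b > 0`, let `b' = b − δ > 0` with `δ > 0`, let `Q` be the
orthogonal projection onto `ker A`, and assume `b ≤ δ‖QU‖_HS²/‖U‖²` and
`Λ = φ(A,b) − φ(A,b') > 0`. Then `∑_j G(Ue_j) ≥ −‖U‖²/δ − φ(A,b)` where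
`G(v) = −(vᵗ(A−b'Id)⁻²v/Λ)‖U‖² − vᵗ(A−b'Id)⁻¹v`. -/
theorem sum_G_lower_bound {n m l : ℕ} (U : Matrix (Fin n) (Fin m) ℝ) (hU : U ≠ 0)
    (A : Matrix (Fin n) (Fin n) ℝ) (hA : A.PosSemidef) (hrank : A.rank = l)
    (b δ : ℝ) (hb : 0 < b) (hδ : 0 < δ) (hb' : 0 < b - δ)
    (heig : ∀ i, hA.isHermitian.eigenvalues i ≠ 0 → b < hA.isHermitian.eigenvalues i)
    (Q : Matrix (Fin n) (Fin n) ℝ) (hQsym : Q.IsHermitian) (hQproj : Q * Q = Q)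
    (hQker : ∀ x : Fin n → ℝ, A *ᵥ x = 0 ↔ Q *ᵥ x = x)
    (hinv : b ≤ δ * frobSq (Q * U) / opNorm U ^ 2)
    (hΛ : 0 < phi U A b - phi U A (b - δ)) :
    -(opNorm U ^ 2 / δ) - phi U A b ≤
      ∑ j, (-((fun i => U i j) ⬝ᵥ (((A - (b - δ) • 1)⁻¹ * (A - (b - δ) • 1)⁻¹) *ᵥ
            (fun i => U i j)) / (phi U A b - phi U A (b - δ)) * opNorm U ^ 2)
        - (fun i => U i j) ⬝ᵥ ((A - (b - δ) • 1)⁻¹ *ᵥ (fun i => U i j))) := by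
  classical
  have hH := hA.isHermitian
  set lam : Fin n → ℝ := hH.eigenvalues with hlamdef
  set W : Matrix (Fin n) (Fin n) ℝ := (hH.eigenvectorUnitary : Matrix (Fin n) (Fin n) ℝ)
    with hWdef
  have hW1 : star W * W = 1 := Unitary.coe_star_mul_self _
  have hW2 : W * star W = 1 := Unitary.coe_mul_star_self _
  have hsp : A = W * Matrix.diagonal lam * star W := by
    have := hH.spectral_theorem
    simpa [RCLike.ofReal_real_eq_id] using this
  have hsW : star W = Wᵀ := by
    rw [Matrix.star_eq_conjTranspose]
    ext i j; simp [Matrix.conjTranspose_apply]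
  have hWtW : Wᵀ * W = 1 := by rw [← hsW]; exact hW1
  -- eigenvalue dichotomy
  have hlc : ∀ i, lam i = 0 ∨ b < lam i := fun i => by
    by_cases h : lam i = 0
    · exact Or.inl h
    · exact Or.inr (heig i h)
  have hfb : ∀ i, lam i - b ≠ 0 := by
    intro i; rcases hlc i with h | h
    · rw [h]; intro hc; linarith
    · intro hc; linarith
  have hfb' : ∀ i, lam i - (b - δ) ≠ 0 := by
    intro i; rcases hlc i with h | h
    · rw [h]; intro hc; linarith
    · intro hc; linarith
  -- inverses
  have hinvb : (A - b • 1)⁻¹ = W * Matrix.diagonal (fun i => (lam i - b)⁻¹) * star W := by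
    rw [hsp, conj_diag_sub_smul W hW2, conj_diag_inv W hW1 hW2 _ hfb]
  have hinvb' : (A - (b - δ) • 1)⁻¹
      = W * Matrix.diagonal (fun i => (lam i - (b - δ))⁻¹) * star W := by
    rw [hsp, conj_diag_sub_smul W hW2, conj_diag_inv W hW1 hW2 _ hfb']
  -- V and c
  set V : Matrix (Fin n) (Fin m) ℝ := star W * U with hVdef
  set c : Fin n → ℝ := fun i => ∑ j, (V i j)^2 with hcdef
  have hc0 : ∀ i, 0 ≤ c i := fun i => Finset.sum_nonneg fun j _ => sq_nonneg _
  -- trace formula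
  have key : ∀ f : Fin n → ℝ,
      (Uᵀ * (W * Matrix.diagonal f * star W) * U).trace = ∑ i, f i * c i := by
    intro f
    have h1 : Uᵀ * (W * Matrix.diagonal f * star W) * U = Vᵀ * Matrix.diagonal f * V := by
      rw [hVdef, hsW, Matrix.transpose_mul, Matrix.transpose_transpose]
      simp only [Matrix.mul_assoc]
    rw [h1, trace_conj_diag]
  have hphib : phi U A b = ∑ i, (lam i - b)⁻¹ * c i := by
    rw [phi, hinvb, key]
  have hphib' : phi U A (b - δ) = ∑ i, (lam i - (b - δ))⁻¹ * c i := by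
    rw [phi, hinvb', key]
  -- square of the resolvent
  have hY2 : (A - (b - δ) • 1)⁻¹ * (A - (b - δ) • 1)⁻¹
      = W * Matrix.diagonal (fun i => (lam i - (b - δ))⁻¹ * (lam i - (b - δ))⁻¹) * star W := by
    rw [hinvb']
    calc (W * Matrix.diagonal (fun i => (lam i - (b-δ))⁻¹) * star W) *
          (W * Matrix.diagonal (fun i => (lam i - (b-δ))⁻¹) * star W)
        = W * (Matrix.diagonal (fun i => (lam i - (b-δ))⁻¹) * (star W * W) *
            Matrix.diagonal (fun i => (lam i - (b-δ))⁻¹)) * star W := by noncomm_ring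
      _ = _ := by rw [hW1, mul_one, Matrix.diagonal_mul_diagonal]
  have hT2 : (Uᵀ * ((A - (b - δ) • 1)⁻¹ * (A - (b - δ) • 1)⁻¹) * U).trace
      = ∑ i, ((lam i - (b - δ))⁻¹ * (lam i - (b - δ))⁻¹) * c i := by
    rw [hY2, key]
  -- the projection Q in the eigenbasis
  set g : Fin n → ℝ := fun i => if lam i = 0 then 1 else 0 with hgdef
  have hQsymT : Qᵀ = Q := by
    rw [← Matrix.conjTranspose_eq_transpose_of_trivial]; exact hQsym
  have hAsymT : Aᵀ = A := by
    rw [← Matrix.conjTranspose_eq_transpose_of_trivial]; exact hH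
  have hcol : ∀ i, Q *ᵥ (fun k => W k i) = g i • (fun k => W k i) := by
    intro i
    have hwi : (fun k => W k i) = ⇑(hH.eigenvectorBasis i) := by
      ext k; exact hH.eigenvectorUnitary_apply k i
    have hAw : A *ᵥ (fun k => W k i) = lam i • (fun k => W k i) := by
      rw [hwi]; exact hH.mulVec_eigenvectorBasis i
    by_cases h0 : lam i = 0
    · have hz : A *ᵥ (fun k => W k i) = 0 := by rw [hAw, h0, zero_smul]
      rw [(hQker _).mp hz, hgdef]
      simp [h0]
    · have hQz : Q *ᵥ (Q *ᵥ (fun k => W k i)) = Q *ᵥ (fun k => W k i) := by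
        rw [Matrix.mulVec_mulVec, hQproj]
      have hAz : A *ᵥ (Q *ᵥ (fun k => W k i)) = 0 := (hQker _).mpr hQz
      have hwz : (fun k => W k i) ⬝ᵥ (Q *ᵥ (fun k => W k i)) = 0 := by
        have h1 := dot_symm A hAsymT (fun k => W k i) (Q *ᵥ (fun k => W k i))
        rw [hAw, hAz, dotProduct_zero, smul_dotProduct] at h1
        exact (smul_eq_zero.mp h1).resolve_left h0
      have hzz : (Q *ᵥ (fun k => W k i)) ⬝ᵥ (Q *ᵥ (fun k => W k i)) = 0 := by
        have h2 := dot_symm Q hQsymT (fun k => W k i) (Q *ᵥ (fun k => W k i))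
        rw [hQz] at h2
        rw [h2, hwz]
      have hz0 : Q *ᵥ (fun k => W k i) = 0 := dotProduct_self_eq_zero.mp hzz
      rw [hz0, hgdef]
      simp [h0]
  have hQW : Q * W = W * Matrix.diagonal g := by
    ext k i
    have h := congrFun (hcol i) k
    simp only [Matrix.mulVec, dotProduct, Pi.smul_apply, smul_eq_mul] at h
    simp only [Matrix.mul_apply, Matrix.diagonal_apply, mul_ite, mul_zero, mul_one,
      Finset.sum_ite_eq, Finset.sum_ite_eq', Finset.mem_univ, if_true]
    rw [h]; ring
  have hQeq : Q = W * Matrix.diagonal g * star W := by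
    have h1 : Q * (W * star W) = W * Matrix.diagonal g * star W := by
      rw [← Matrix.mul_assoc, hQW]
    rwa [hW2, mul_one] at h1
  have hK : frobSq (Q * U) = ∑ i, g i * c i := by
    have hQU : Q * U = W * (Matrix.diagonal g * V) := by
      rw [hQeq, hVdef]; simp only [Matrix.mul_assoc]
    have hgg : (fun i => g i * g i) = g := by
      ext i; by_cases h : lam i = 0 <;> simp [hgdef, h]
    rw [frobSq_eq_trace, hQU]
    have h2 : (W * (Matrix.diagonal g * V))ᵀ * (W * (Matrix.diagonal g * V))
        = Vᵀ * Matrix.diagonal g * V := by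
      calc (W * (Matrix.diagonal g * V))ᵀ * (W * (Matrix.diagonal g * V))
          = (Matrix.diagonal g * V)ᵀ * (Wᵀ * W) * (Matrix.diagonal g * V) := by
            rw [Matrix.transpose_mul]; simp only [Matrix.mul_assoc]
        _ = (Matrix.diagonal g * V)ᵀ * (Matrix.diagonal g * V) := by
            rw [hWtW, Matrix.mul_one]
        _ = Vᵀ * (Matrix.diagonal g * Matrix.diagonal g) * V := by
            rw [Matrix.transpose_mul, Matrix.diagonal_transpose]; simp only [Matrix.mul_assoc]
        _ = Vᵀ * Matrix.diagonal g * V := by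
            rw [Matrix.diagonal_mul_diagonal, hgg]
    rw [h2, trace_conj_diag]
  -- scalar quantities
  set t : ℝ := opNorm U ^ 2 with htdef
  have hop : 0 < opNorm U := by
    rw [opNorm, norm_pos_iff]
    intro h
    apply hU
    have h1 : Matrix.toEuclideanLin U = 0 := by
      apply LinearMap.toContinuousLinearMap.injective
      simpa using h
    have h2 : U = Matrix.toEuclideanLin.symm 0 := by rw [← h1]; simp
    rw [h2]; simp
  have ht : 0 < t := by rw [htdef]; positivity
  set K : ℝ := frobSq (Q * U) with hKdef
  set Λ : ℝ := phi U A b - phi U A (b - δ) with hΛdef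
  have hbt : b * t ≤ δ * K := (le_div_iff₀ ht).mp hinv
  have hK0 : 0 < K := by nlinarith
  set T2 : ℝ := ∑ i, ((lam i - (b - δ))⁻¹ * (lam i - (b - δ))⁻¹) * c i with hT2def
  -- rewrite goal sum
  have hsum : (∑ j, (-((fun i => U i j) ⬝ᵥ (((A - (b - δ) • 1)⁻¹ * (A - (b - δ) • 1)⁻¹) *ᵥ
            (fun i => U i j)) / Λ * t)
        - (fun i => U i j) ⬝ᵥ ((A - (b - δ) • 1)⁻¹ *ᵥ (fun i => U i j))))
      = -(T2 / Λ * t) - phi U A (b - δ) := by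
    rw [Finset.sum_sub_distrib]
    congr 1
    · rw [← hT2, ← sum_col_dot U ((A - (b - δ) • 1)⁻¹ * (A - (b - δ) • 1)⁻¹),
        Finset.sum_div, Finset.sum_mul, ← Finset.sum_neg_distrib]
    · rw [sum_col_dot, phi]
  rw [hsum]
  have hΛexpr : Λ = ∑ i, ((lam i - b)⁻¹ - (lam i - (b - δ))⁻¹) * c i := by
    rw [hΛdef, hphib, hphib', ← Finset.sum_sub_distrib]
    congr 1; ext i; ring
  have hC2 : δ * K / (b * (b - δ)) ≤ Λ := by
    have h1 : δ * K / (b * (b - δ)) = ∑ i, (δ / (b * (b - δ))) * (g i * c i) := by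
      rw [hK, Finset.mul_sum, Finset.sum_div]
      congr 1; ext i; ring
    rw [h1, hΛexpr]
    apply Finset.sum_le_sum
    intro i _
    rcases hlc i with h0 | hbig
    · have nb := hb.ne'
      have nb' := hb'.ne'
      have he : ((0:ℝ) - b)⁻¹ - ((0:ℝ) - (b - δ))⁻¹ = δ / (b * (b - δ)) := by
        rw [zero_sub, zero_sub, inv_neg, inv_neg]
        field_simp
        ring
      have hg1 : g i = 1 := by simp [hgdef, h0]
      rw [h0, he, hg1, one_mul]
    · have hg0 : g i = 0 := by
        simp only [hgdef]
        exact if_neg (by linarith)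
      have h1 : 0 < lam i - b := by linarith
      have h2 : 0 < lam i - (b - δ) := by linarith
      have hpos : 0 ≤ (lam i - b)⁻¹ - (lam i - (b - δ))⁻¹ := by
        have h3 : (lam i - (b - δ))⁻¹ ≤ (lam i - b)⁻¹ :=
          inv_anti₀ h1 (by linarith)
        linarith
      calc (δ / (b * (b - δ))) * (g i * c i) = 0 := by rw [hg0]; ring
        _ ≤ _ := mul_nonneg hpos (hc0 i)
  have hC3 : δ * T2 - Λ ≤ δ^2 * K / (b * (b - δ)^2) := by
    have h1 : δ * T2 - Λ = ∑ i, (δ * ((lam i - (b - δ))⁻¹ * (lam i - (b - δ))⁻¹)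
        - ((lam i - b)⁻¹ - (lam i - (b - δ))⁻¹)) * c i := by
      rw [hT2def, hΛexpr, Finset.mul_sum, ← Finset.sum_sub_distrib]
      congr 1; ext i; ring
    have h2 : δ^2 * K / (b * (b - δ)^2) = ∑ i, (δ^2 / (b * (b - δ)^2)) * (g i * c i) := by
      rw [hK, Finset.mul_sum, Finset.sum_div]
      congr 1; ext i; ring
    rw [h1, h2]
    apply Finset.sum_le_sum
    intro i _
    rcases hlc i with h0 | hbig
    · have nb := hb.ne'
      have nb' := hb'.ne'
      have hs : δ * (((0:ℝ) - (b - δ))⁻¹ * ((0:ℝ) - (b - δ))⁻¹)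
          - (((0:ℝ) - b)⁻¹ - ((0:ℝ) - (b - δ))⁻¹) = δ^2 / (b * (b - δ)^2) := by
        rw [zero_sub, zero_sub, inv_neg, inv_neg]
        field_simp
        ring
      have hg1 : g i = 1 := by simp [hgdef, h0]
      rw [h0, hs, hg1, one_mul]
    · have hg0 : g i = 0 := by
        simp only [hgdef]
        exact if_neg (by linarith)
      have h1 : 0 < lam i - b := by linarith
      have h2 : 0 < lam i - (b - δ) := by linarith
      have hkey : δ * ((lam i - (b - δ))⁻¹ * (lam i - (b - δ))⁻¹)
          ≤ (lam i - b)⁻¹ - (lam i - (b - δ))⁻¹ := by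
        have e1 : (lam i - b)⁻¹ - (lam i - (b - δ))⁻¹
            = δ / ((lam i - b) * (lam i - (b - δ))) := by
          field_simp
          ring
        have e2 : δ * ((lam i - (b - δ))⁻¹ * (lam i - (b - δ))⁻¹)
            = δ / ((lam i - (b - δ)) * (lam i - (b - δ))) := by
          field_simp
        rw [e1, e2, div_le_div_iff₀ (by positivity) (by positivity)]
        nlinarith
      have hnp : δ * ((lam i - (b - δ))⁻¹ * (lam i - (b - δ))⁻¹)
          - ((lam i - b)⁻¹ - (lam i - (b - δ))⁻¹) ≤ 0 := by linarith
      calc (δ * ((lam i - (b - δ))⁻¹ * (lam i - (b - δ))⁻¹)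
          - ((lam i - b)⁻¹ - (lam i - (b - δ))⁻¹)) * c i
          ≤ 0 := mul_nonpos_of_nonpos_of_nonneg hnp (hc0 i)
        _ = (δ^2 / (b * (b - δ)^2)) * (g i * c i) := by rw [hg0]; ring
  -- final assembly
  clear_value t K Λ T2
  have hΛb : 0 < δ * K / (b * (b - δ)) := div_pos (mul_pos hδ hK0) (mul_pos hb hb')
  have p1 : t * (δ * T2 - Λ) ≤ t * (δ^2 * K / (b * (b - δ)^2)) :=
    mul_le_mul_of_nonneg_left hC3 ht.le
  have p2 : t * (δ^2 * K / (b * (b - δ)^2)) ≤ δ * (δ * K / (b * (b - δ)))^2 := by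
    have e1 : t * (δ^2 * K / (b * (b - δ)^2)) = (t * (δ^2 * K)) / (b * (b - δ)^2) := by ring
    have e2 : δ * (δ * K / (b * (b - δ)))^2 = (δ * (δ * K)^2) / ((b * (b - δ))^2) := by
      rw [div_pow]; ring
    rw [e1, e2, div_le_div_iff₀ (by positivity) (by positivity)]
    nlinarith [mul_le_mul_of_nonneg_left hbt (by positivity : (0:ℝ) ≤ δ^2 * K * b * (b - δ)^2)]
  have p3 : δ * (δ * K / (b * (b - δ)))^2 ≤ δ * Λ^2 :=
    mul_le_mul_of_nonneg_left (pow_le_pow_left₀ hΛb.le hC2 2) hδ.le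
  have hgoal2 : δ * (T2 * t) ≤ t * Λ + δ * Λ^2 := by nlinarith [p1, p2, p3]
  have hfinal : T2 / Λ * t ≤ t / δ + Λ := by
    rw [div_mul_eq_mul_div, div_le_iff₀ hΛ]
    have hexp : (t / δ + Λ) * Λ = (t * Λ + δ * Λ^2) / δ := by
      field_simp
    rw [hexp, le_div_iff₀ hδ]
    nlinarith [hgoal2]
  have hΛeq : phi U A b = phi U A (b - δ) + Λ := by rw [hΛdef]; ring
  calc -(t / δ) - phi U A b = -(t / δ + Λ) - phi U A (b - δ) := by rw [hΛeq]; ring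
    _ ≤ -(T2 / Λ * t) - phi U A (b - δ) := by linarith [hfinal]
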